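/- Fix γ > 0 and define g₀(r) = (π/(2¹¹ γ³))^{1/2}·|r|^{−5/2} for r ≠ 0. Then for each sign, g_{B,±} converges pointwise to g₀ as B → 0⁺: for every r ≠ 0, lim_{B→0⁺} g_{B,±}(r) = g₀(r). Moreover g₀ is the density of a Lévy measure on ℝ \ {0}, i.e. ∫_{ℝ \ {0}} min(1, r²)·g₀(r) dr < ∞. -/

import Mathlib

open Filter Topology MeasureTheory

noncomputable def psi (B ε t : ℝ) : ℝ := (2 * Real.sqrt (t ^ 2 + B ^ 2 / 4) + ε * B) * t
noncomputable def psi' (B ε t : ℝ) : ℝ :=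
  2 * Real.sqrt (t ^ 2 + B ^ 2 / 4) + 2 * t ^ 2 / Real.sqrt (t ^ 2 + B ^ 2 / 4) + ε * B
noncomputable def phi (B ε t : ℝ) : ℝ :=
  (1 / 2 + ε * B / (4 * Real.sqrt (t ^ 2 + B ^ 2 / 4))) * t ^ 2

lemma sq_add_pos (B t : ℝ) (hB : 0 < B) : 0 < t ^ 2 + B ^ 2 / 4 := by positivity

lemma sqrt_pos' (B t : ℝ) (hB : 0 < B) : 0 < Real.sqrt (t ^ 2 + B ^ 2 / 4) :=
  Real.sqrt_pos.2 (sq_add_pos B t hB)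

lemma sqrt_ge_half (B t : ℝ) (hB : 0 < B) : B / 2 ≤ Real.sqrt (t ^ 2 + B ^ 2 / 4) := by
  rw [Real.le_sqrt (by linarith) (le_of_lt (sq_add_pos B t hB))]
  nlinarith [sq_nonneg t]

lemma sqrt_ge_abs (B t : ℝ) : |t| ≤ Real.sqrt (t ^ 2 + B ^ 2 / 4) := by
  rw [← Real.sqrt_sq_eq_abs]
  exact Real.sqrt_le_sqrt (by nlinarith [sq_nonneg B])

lemma sqrt_le_abs_add (B t : ℝ) (hB : 0 < B) :
    Real.sqrt (t ^ 2 + B ^ 2 / 4) ≤ |t| + B / 2 := by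
  rw [show t ^ 2 + B ^ 2 / 4 = |t| ^ 2 + (B/2) ^ 2 by rw [sq_abs]; ring]
  calc Real.sqrt (|t| ^ 2 + (B/2) ^ 2) ≤ Real.sqrt ((|t| + B/2) ^ 2) :=
        Real.sqrt_le_sqrt (by nlinarith [abs_nonneg t])
    _ = |t| + B / 2 := Real.sqrt_sq (by positivity)

lemma psi_hasDerivAt (B ε : ℝ) (hB : 0 < B) (t : ℝ) :
    HasDerivAt (psi B ε) (psi' B ε t) t := by
  have hs := sqrt_pos' B t hB
  have h1 : HasDerivAt (fun u : ℝ => u ^ 2 + B ^ 2 / 4) (2 * t) t := by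
    simpa using ((hasDerivAt_pow 2 t).add_const (B ^ 2 / 4))
  have h2 : HasDerivAt (fun u : ℝ => Real.sqrt (u ^ 2 + B ^ 2 / 4))
      (2 * t / (2 * Real.sqrt (t ^ 2 + B ^ 2 / 4))) t := h1.sqrt (sq_add_pos B t hB).ne'
  have h3 : HasDerivAt (fun u : ℝ => (2 * Real.sqrt (u ^ 2 + B ^ 2 / 4) + ε * B) * u)
      (2 * (2 * t / (2 * Real.sqrt (t ^ 2 + B ^ 2 / 4))) * t
        + (2 * Real.sqrt (t ^ 2 + B ^ 2 / 4) + ε * B) * 1) t := by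
    exact (((h2.const_mul 2).add_const (ε * B)).mul (hasDerivAt_id t))
  have : 2 * (2 * t / (2 * Real.sqrt (t ^ 2 + B ^ 2 / 4))) * t
        + (2 * Real.sqrt (t ^ 2 + B ^ 2 / 4) + ε * B) * 1 = psi' B ε t := by
    unfold psi'; field_simp; ring
  rw [this] at h3
  exact h3

lemma psi'_pos (B ε : ℝ) (hB : 0 < B) (hε : ε = 1 ∨ ε = -1) (t : ℝ) (ht : t ≠ 0) :
    0 < psi' B ε t := by
  have hs := sqrt_pos' B t hB
  have h2 := sqrt_ge_half B t hB
  have hεB : -B ≤ ε * B := by rcases hε with h | h <;> rw [h] <;> nlinarith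
  have ht2 : 0 < 2 * t ^ 2 / Real.sqrt (t ^ 2 + B ^ 2 / 4) := by positivity
  unfold psi'; nlinarith

lemma psi'_nonneg (B ε : ℝ) (hB : 0 < B) (hε : ε = 1 ∨ ε = -1) (t : ℝ) :
    0 ≤ psi' B ε t := by
  have hs := sqrt_pos' B t hB
  have h2 := sqrt_ge_half B t hB
  have hεB : -B ≤ ε * B := by rcases hε with h | h <;> rw [h] <;> nlinarith
  have ht2 : 0 ≤ 2 * t ^ 2 / Real.sqrt (t ^ 2 + B ^ 2 / 4) := by positivity
  unfold psi'; nlinarith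

lemma psi_continuous (B ε : ℝ) : Continuous (psi B ε) := by
  unfold psi
  fun_prop

lemma psi_strictMono (B ε : ℝ) (hB : 0 < B) (hε : ε = 1 ∨ ε = -1) :
    StrictMono (psi B ε) := by
  have hderiv : ∀ t : ℝ, deriv (psi B ε) t = psi' B ε t :=
    fun t => (psi_hasDerivAt B ε hB t).deriv
  have hIci : StrictMonoOn (psi B ε) (Set.Ici 0) := by
    apply strictMonoOn_of_deriv_pos (convex_Ici 0) (psi_continuous B ε).continuousOn
    intro t ht
    rw [interior_Ici] at ht
    rw [hderiv]
    exact psi'_pos B ε hB hε t (ne_of_gt ht)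
  have hIic : StrictMonoOn (psi B ε) (Set.Iic 0) := by
    apply strictMonoOn_of_deriv_pos (convex_Iic 0) (psi_continuous B ε).continuousOn
    intro t ht
    rw [interior_Iic] at ht
    rw [hderiv]
    exact psi'_pos B ε hB hε t (ne_of_lt ht)
  intro a b hab
  rcases le_total b 0 with hb | hb
  · exact hIic (le_of_lt (lt_of_lt_of_le hab hb)) hb hab
  · rcases le_total 0 a with ha | ha
    · exact hIci ha (le_trans ha (le_of_lt hab)) hab
    · rcases eq_or_lt_of_le hb with hb' | hb'
      · subst hb'
        exact hIic ha Set.self_mem_Iic hab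
      · have h0a : psi B ε a ≤ psi B ε 0 := by
          rcases eq_or_lt_of_le ha with h | h
          · rw [h]
          · exact (hIic (le_of_lt h) Set.self_mem_Iic h).le
        exact lt_of_le_of_lt h0a (hIci Set.self_mem_Ici hb hb')


lemma psi_tendsto_atTop (B ε : ℝ) (hB : 0 < B) (hε : ε = 1 ∨ ε = -1) :
    Tendsto (psi B ε) atTop atTop := by
  have hεB : -B ≤ ε * B := by rcases hε with h | h <;> rw [h] <;> nlinarith
  apply tendsto_atTop_mono' atTop (show ∀ᶠ t in atTop, (2 * t - B) * t ≤ psi B ε t from ?_)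
  · have : Tendsto (fun t : ℝ => (2 * t - B) * t) atTop atTop := by
      apply Filter.Tendsto.atTop_mul_atTop₀ ?_ tendsto_id
      exact tendsto_atTop_add_const_right _ (-B) (tendsto_id.const_mul_atTop two_pos)
    exact this
  · filter_upwards [eventually_ge_atTop (0:ℝ)] with t ht
    have h1 : 2 * t - B ≤ 2 * Real.sqrt (t ^ 2 + B ^ 2 / 4) + ε * B := by
      have := sqrt_ge_abs B t
      rw [abs_of_nonneg ht] at this
      linarith
    unfold psi
    exact mul_le_mul_of_nonneg_right h1 ht

lemma psi_tendsto_atBot (B ε : ℝ) (hB : 0 < B) (hε : ε = 1 ∨ ε = -1) :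
    Tendsto (psi B ε) atBot atBot := by
  have hεB : -B ≤ ε * B := by rcases hε with h | h <;> rw [h] <;> nlinarith
  apply tendsto_atBot_mono' atBot (show ∀ᶠ t in atBot, psi B ε t ≤ -((2 * t + B) * t) from ?_)
  · apply (tendsto_neg_atTop_atBot).comp
    apply Filter.Tendsto.atBot_mul_atBot₀ ?_ tendsto_id
    apply tendsto_atBot_add_const_right
    exact (tendsto_id (α := ℝ)).const_mul_atBot two_pos
  · filter_upwards [eventually_le_atBot (0:ℝ)] with t ht
    have h1 : -2 * t - B ≤ 2 * Real.sqrt (t ^ 2 + B ^ 2 / 4) + ε * B := by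
      have := sqrt_ge_abs B t
      rw [abs_of_nonpos ht] at this
      linarith
    have := mul_le_mul_of_nonpos_right h1 ht
    unfold psi
    nlinarith

lemma psi_surjective (B ε : ℝ) (hB : 0 < B) (hε : ε = 1 ∨ ε = -1) :
    Function.Surjective (psi B ε) :=
  (psi_continuous B ε).surjective (psi_tendsto_atTop B ε hB hε) (psi_tendsto_atBot B ε hB hε)

lemma phi_continuous (B ε : ℝ) (hB : 0 < B) : Continuous (phi B ε) := by
  unfold phi
  apply Continuous.mul ?_ (continuous_pow 2)
  apply continuous_const.add
  apply Continuous.div continuous_const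
  · fun_prop
  · intro t
    have := sqrt_pos' B t hB
    positivity

lemma g_formula (γ : ℝ) (hγ : 0 < γ) (x h g : ℝ → ℝ → ℝ → ℝ)
    (hx : ∀ B : ℝ, 0 < B → ∀ ε : ℝ, (ε = 1 ∨ ε = -1) → ∀ r : ℝ, r ≠ 0 →
      (2 * Real.sqrt (x B ε r ^ 2 + B ^ 2 / 4) + ε * B) * x B ε r = Real.pi / (γ * r))
    (hh : ∀ B : ℝ, 0 < B → ∀ ε : ℝ, (ε = 1 ∨ ε = -1) → ∀ r : ℝ, r ≠ 0 →
      h B ε r = (1 / (4 * Real.pi)) *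
        (if 0 < r then
          ∫ t in (0 : ℝ)..(x B ε r),
            (1 / 2 + ε * B / (4 * Real.sqrt (t ^ 2 + B ^ 2 / 4))) * t ^ 2
         else
          ∫ t in (x B ε r)..(0 : ℝ),
            (1 / 2 + ε * B / (4 * Real.sqrt (t ^ 2 + B ^ 2 / 4))) * t ^ 2))
    (hg : ∀ B : ℝ, 0 < B → ∀ ε : ℝ, (ε = 1 ∨ ε = -1) → ∀ r : ℝ, r ≠ 0 →
      g B ε r = if 0 < r then -(deriv (h B ε) r) else deriv (h B ε) r)
    (B : ℝ) (hB : 0 < B) (ε : ℝ) (hε : ε = 1 ∨ ε = -1) (r : ℝ) (hr : r ≠ 0) :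
    g B ε r = phi B ε (x B ε r) / (4 * γ * r ^ 2 * psi' B ε (x B ε r)) := by
  have hmono := psi_strictMono B ε hB hε
  have hsurj := psi_surjective B ε hB hε
  set e := StrictMono.orderIsoOfSurjective (psi B ε) hmono hsurj with he
  have hcoe : ∀ t, e t = psi B ε t := fun t => by
    rw [he, StrictMono.coe_orderIsoOfSurjective]
  have hinvval : ∀ a, psi B ε (e.symm a) = a := fun a => by
    rw [← hcoe]; exact e.apply_symm_apply a
  -- x B ε s = e.symm (π / (γ * s)) for s ≠ 0
  have hXdef : ∀ s : ℝ, s ≠ 0 → x B ε s = e.symm (Real.pi / (γ * s)) := by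
    intro s hs
    apply hmono.injective
    rw [hinvval]
    have := hx B hB ε hε s hs
    unfold psi
    linarith [this]
  set X := x B ε r with hXr
  have hX0 : X ≠ 0 := by
    intro h0
    have := hx B hB ε hε r hr
    rw [← hXr, h0] at this
    simp at this
    have hπ : Real.pi / (γ * r) ≠ 0 := by
      apply div_ne_zero Real.pi_ne_zero (mul_ne_zero (ne_of_gt hγ) hr)
    exact hπ this.symm
  have hpsi'pos := psi'_pos B ε hB hε X hX0
  -- derivative of e.symm at a := π/(γ r)
  have hsymmX : e.symm (Real.pi / (γ * r)) = X := (hXdef r hr).symm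
  have hinv : HasDerivAt (⇑e.symm) (psi' B ε X)⁻¹ (Real.pi / (γ * r)) := by
    apply HasDerivAt.of_local_left_inverse (e.symm.continuous.continuousAt)
      (by rw [hsymmX]; exact psi_hasDerivAt B ε hB X) (ne_of_gt hpsi'pos)
    filter_upwards with y
    rw [← hcoe]; exact e.apply_symm_apply y
  -- derivative of s ↦ π/(γ s)
  have hc : HasDerivAt (fun s : ℝ => Real.pi / (γ * s)) (Real.pi / γ * (-(r ^ 2)⁻¹)) r := by
    have h1 : HasDerivAt (fun s : ℝ => Real.pi / γ * s⁻¹) (Real.pi / γ * (-(r ^ 2)⁻¹)) r :=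
      (hasDerivAt_inv hr).const_mul _
    apply h1.congr_of_eventuallyEq
    filter_upwards with s
    rw [div_mul_eq_div_div, div_eq_mul_inv]
  have hXder : HasDerivAt (fun s : ℝ => e.symm (Real.pi / (γ * s)))
      ((psi' B ε X)⁻¹ * (Real.pi / γ * (-(r ^ 2)⁻¹))) r := by
    have := hinv.comp r hc
    exact this
  -- F and its derivative
  set F := fun u : ℝ => ∫ t in (0:ℝ)..u, phi B ε t with hF
  have hFder : ∀ u : ℝ, HasDerivAt F (phi B ε u) u := by
    intro u
    apply intervalIntegral.integral_hasDerivAt_right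
      ((phi_continuous B ε hB).intervalIntegrable _ _)
      ((phi_continuous B ε hB).stronglyMeasurableAtFilter _ _)
      (phi_continuous B ε hB).continuousAt
  have hcomp : HasDerivAt (fun s : ℝ => F (e.symm (Real.pi / (γ * s))))
      (phi B ε X * ((psi' B ε X)⁻¹ * (Real.pi / γ * (-(r ^ 2)⁻¹)))) r := by
    have hFX : HasDerivAt F (phi B ε X) (e.symm (Real.pi / (γ * r))) := by
      rw [hsymmX]; exact hFder X
    exact hFX.comp r hXder
  have hπ4 : (4 : ℝ) * Real.pi ≠ 0 := by
    have := Real.pi_pos; positivity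
  rcases lt_or_gt_of_ne hr with hrneg | hrpos
  · -- r < 0
    have heq : h B ε =ᶠ[𝓝 r] fun s => -((1 / (4 * Real.pi)) * F (e.symm (Real.pi / (γ * s)))) := by
      filter_upwards [Iio_mem_nhds hrneg] with s hs
      have hs0 : s ≠ 0 := ne_of_lt hs
      rw [hh B hB ε hε s hs0, if_neg (not_lt.2 (le_of_lt hs)), hXdef s hs0]
      rw [intervalIntegral.integral_symm]
      show (1 / (4 * Real.pi)) * -(F (e.symm (Real.pi / (γ * s)))) = _
      ring
    have hhder : HasDerivAt (h B ε)
        (-((1 / (4 * Real.pi)) * (phi B ε X * ((psi' B ε X)⁻¹ * (Real.pi / γ * (-(r ^ 2)⁻¹)))))) r := by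
      exact ((hcomp.const_mul (1 / (4 * Real.pi))).neg).congr_of_eventuallyEq heq
    rw [hg B hB ε hε r hr, if_neg (not_lt.2 (le_of_lt hrneg)), hhder.deriv]
    field_simp
  · -- r > 0
    have heq : h B ε =ᶠ[𝓝 r] fun s => (1 / (4 * Real.pi)) * F (e.symm (Real.pi / (γ * s))) := by
      filter_upwards [Ioi_mem_nhds hrpos] with s hs
      have hs0 : s ≠ 0 := ne_of_gt hs
      rw [hh B hB ε hε s hs0, if_pos (show (0:ℝ) < s from hs), hXdef s hs0]
      rw [hF]
      rfl
    have hhder : HasDerivAt (h B ε)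
        ((1 / (4 * Real.pi)) * (phi B ε X * ((psi' B ε X)⁻¹ * (Real.pi / γ * (-(r ^ 2)⁻¹))))) r := by
      exact (hcomp.const_mul (1 / (4 * Real.pi))).congr_of_eventuallyEq heq
    rw [hg B hB ε hε r hr, if_pos hrpos, hhder.deriv]
    field_simp

lemma x_sq_tendsto (γ : ℝ) (hγ : 0 < γ) (x : ℝ → ℝ → ℝ → ℝ)
    (hx : ∀ B : ℝ, 0 < B → ∀ ε : ℝ, (ε = 1 ∨ ε = -1) → ∀ r : ℝ, r ≠ 0 →
      (2 * Real.sqrt (x B ε r ^ 2 + B ^ 2 / 4) + ε * B) * x B ε r = Real.pi / (γ * r))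
    (ε : ℝ) (hε : ε = 1 ∨ ε = -1) (r : ℝ) (hr : r ≠ 0) :
    Tendsto (fun B => (x B ε r) ^ 2) (𝓝[>] 0) (𝓝 (|Real.pi / (γ * r)| / 2)) := by
  set m := |Real.pi / (γ * r)| with hm
  have hm0 : 0 < m := by
    rw [hm]
    exact abs_pos.2 (div_ne_zero Real.pi_ne_zero (mul_ne_zero (ne_of_gt hγ) hr))
  set M := max 1 m with hM
  have hM1 : (1:ℝ) ≤ M := le_max_left _ _
  have hMm : m ≤ M := le_max_right _ _
  have hbound : ∀ B ∈ Set.Ioo (0:ℝ) 1, |(x B ε r) ^ 2 - m / 2| ≤ B * M := by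
    intro B hB
    obtain ⟨hB0, hB1⟩ := hB
    set X := x B ε r with hX
    have heq := hx B hB0 ε hε r hr
    have hs1 := sqrt_ge_abs B X
    have hs2 := sqrt_le_abs_add B X hB0
    have hs3 := sqrt_ge_half B X hB0
    have hεB : -B ≤ ε * B ∧ ε * B ≤ B := by
      constructor <;> rcases hε with h | h <;> rw [h] <;> nlinarith
    have hcoef : 0 ≤ 2 * Real.sqrt (X ^ 2 + B ^ 2 / 4) + ε * B := by nlinarith [hεB.1]
    have hmeq : m = (2 * Real.sqrt (X ^ 2 + B ^ 2 / 4) + ε * B) * |X| := by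
      rw [hm, ← heq, abs_mul, abs_of_nonneg hcoef]
    have habsX : 0 ≤ |X| := abs_nonneg X
    have hXsq : |X| ^ 2 = X ^ 2 := sq_abs X
    -- lower and upper bounds
    have hlow : 2 * X ^ 2 - B * |X| ≤ m := by nlinarith [hεB.1]
    have hhigh : m ≤ 2 * X ^ 2 + 2 * B * |X| := by nlinarith [hεB.2]
    -- |X| ≤ M
    have hXM : |X| ≤ M := by
      by_contra hc
      push_neg at hc
      have h1 : (1:ℝ) < |X| := lt_of_le_of_lt hM1 hc
      have h2 : m < |X| := lt_of_le_of_lt hMm hc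
      nlinarith
    rw [abs_le]
    constructor <;> nlinarith
  have hb : Tendsto (fun B : ℝ => B * M) (𝓝[>] 0) (𝓝 0) := by
    have : Tendsto (fun B : ℝ => B * M) (𝓝 0) (𝓝 (0 * M)) :=
      (tendsto_id.mul_const M)
    rw [zero_mul] at this
    exact this.mono_left nhdsWithin_le_nhds
  have h0 : Tendsto (fun B => (x B ε r) ^ 2 - m / 2) (𝓝[>] 0) (𝓝 0) := by
    apply squeeze_zero_norm' _ hb
    filter_upwards [Ioo_mem_nhdsGT_of_mem (Set.mem_Ico.2 ⟨le_refl (0:ℝ), zero_lt_one⟩)] with B hB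
    exact hbound B hB
  have := h0.add_const (m / 2)
  simpa using this

lemma limit_value_eq (γ : ℝ) (hγ : 0 < γ) (r : ℝ) (hr : r ≠ 0) :
    Real.sqrt (Real.pi / (2 ^ 11 * γ ^ 3)) * |r| ^ (-(5 / 2 : ℝ)) =
      Real.sqrt (|Real.pi / (γ * r)| / 2) / (32 * γ * r ^ 2) := by
  have hπ := Real.pi_pos
  have habsr : 0 < |r| := abs_pos.2 hr
  have habs : |Real.pi / (γ * r)| = Real.pi / (γ * |r|) := by
    rw [abs_div, abs_of_pos hπ, abs_mul, abs_of_pos hγ]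
  have h5 : |r| ^ (-(5 / 2 : ℝ)) = (Real.sqrt (|r| ^ 5))⁻¹ := by
    rw [show (-(5/2 : ℝ)) = 5 * (1/2) * (-1) by norm_num,
      Real.rpow_mul (abs_nonneg r), Real.rpow_mul (abs_nonneg r)]
    rw [Real.rpow_neg_one]
    congr 1
    rw [show ((5:ℝ) = ((5:ℕ):ℝ)) by norm_num, Real.rpow_natCast, ← Real.sqrt_eq_rpow]
  rw [h5, habs]
  rw [show (32 * γ * r ^ 2) = Real.sqrt ((32 * γ * r ^ 2) ^ 2) from
    (Real.sqrt_sq (by positivity)).symm]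
  rw [← Real.sqrt_div (by positivity)]
  rw [← div_eq_mul_inv, ← Real.sqrt_div (by positivity)]
  congr 1
  rw [show r ^ 2 = |r| ^ 2 from (sq_abs r).symm]
  field_simp
  norm_num


lemma g_tendsto (γ : ℝ) (hγ : 0 < γ) (x h g : ℝ → ℝ → ℝ → ℝ)
    (hx : ∀ B : ℝ, 0 < B → ∀ ε : ℝ, (ε = 1 ∨ ε = -1) → ∀ r : ℝ, r ≠ 0 →
      (2 * Real.sqrt (x B ε r ^ 2 + B ^ 2 / 4) + ε * B) * x B ε r = Real.pi / (γ * r))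
    (hh : ∀ B : ℝ, 0 < B → ∀ ε : ℝ, (ε = 1 ∨ ε = -1) → ∀ r : ℝ, r ≠ 0 →
      h B ε r = (1 / (4 * Real.pi)) *
        (if 0 < r then
          ∫ t in (0 : ℝ)..(x B ε r),
            (1 / 2 + ε * B / (4 * Real.sqrt (t ^ 2 + B ^ 2 / 4))) * t ^ 2
         else
          ∫ t in (x B ε r)..(0 : ℝ),
            (1 / 2 + ε * B / (4 * Real.sqrt (t ^ 2 + B ^ 2 / 4))) * t ^ 2))
    (hg : ∀ B : ℝ, 0 < B → ∀ ε : ℝ, (ε = 1 ∨ ε = -1) → ∀ r : ℝ, r ≠ 0 →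
      g B ε r = if 0 < r then -(deriv (h B ε) r) else deriv (h B ε) r)
    (ε : ℝ) (hε : ε = 1 ∨ ε = -1) (r : ℝ) (hr : r ≠ 0) :
    Tendsto (fun B => g B ε r) (𝓝[>] 0)
      (𝓝 (Real.sqrt (Real.pi / (2 ^ 11 * γ ^ 3)) * |r| ^ (-(5 / 2 : ℝ)))) := by
  set m := |Real.pi / (γ * r)| with hm
  have hm0 : 0 < m := by
    rw [hm]
    exact abs_pos.2 (div_ne_zero Real.pi_ne_zero (mul_ne_zero (ne_of_gt hγ) hr))
  set S := Real.sqrt (m / 2) with hS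
  have hS0 : 0 < S := Real.sqrt_pos.2 (by linarith)
  have hSsq : S ^ 2 = m / 2 := Real.sq_sqrt (by linarith)
  have hq : Tendsto (fun B => (x B ε r) ^ 2) (𝓝[>] 0) (𝓝 (m / 2)) :=
    x_sq_tendsto γ hγ x hx ε hε r hr
  have hBt : Tendsto (fun B : ℝ => B) (𝓝[>] 0) (𝓝 0) :=
    tendsto_id.mono_left nhdsWithin_le_nhds
  have hsq : Tendsto (fun B => Real.sqrt ((x B ε r) ^ 2 + B ^ 2 / 4)) (𝓝[>] 0) (𝓝 S) := by
    have h1 : Tendsto (fun B => (x B ε r) ^ 2 + B ^ 2 / 4) (𝓝[>] 0) (𝓝 (m / 2 + 0 ^ 2 / 4)) :=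
      hq.add ((hBt.pow 2).div_const 4)
    rw [show m / 2 + (0:ℝ) ^ 2 / 4 = m / 2 by norm_num] at h1
    exact h1.sqrt
  -- numerator
  have hnum : Tendsto (fun B => (1 / 2 + ε * B / (4 * Real.sqrt ((x B ε r) ^ 2 + B ^ 2 / 4)))
      * (x B ε r) ^ 2) (𝓝[>] 0) (𝓝 ((1 / 2 + ε * 0 / (4 * S)) * (m / 2))) := by
    apply Tendsto.mul _ hq
    apply Tendsto.add tendsto_const_nhds
    exact ((hBt.const_mul ε).div (hsq.const_mul 4) (by positivity))
  -- denominator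
  have hden : Tendsto (fun B => 4 * γ * r ^ 2 *
      (2 * Real.sqrt ((x B ε r) ^ 2 + B ^ 2 / 4)
        + 2 * (x B ε r) ^ 2 / Real.sqrt ((x B ε r) ^ 2 + B ^ 2 / 4) + ε * B)) (𝓝[>] 0)
      (𝓝 (4 * γ * r ^ 2 * (2 * S + 2 * (m / 2) / S + ε * 0))) := by
    apply Tendsto.const_mul
    exact ((hsq.const_mul 2).add ((hq.const_mul 2).div hsq (ne_of_gt hS0))).add
      (hBt.const_mul ε)
  have hdenne : 4 * γ * r ^ 2 * (2 * S + 2 * (m / 2) / S + ε * 0) ≠ 0 := by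
    have : 0 < 2 * S + 2 * (m / 2) / S + ε * 0 := by
      have : 0 < 2 * (m / 2) / S := by positivity
      nlinarith
    positivity
  have hlim := hnum.div hden hdenne
  have hval : (1 / 2 + ε * 0 / (4 * S)) * (m / 2) /
      (4 * γ * r ^ 2 * (2 * S + 2 * (m / 2) / S + ε * 0)) =
      Real.sqrt (Real.pi / (2 ^ 11 * γ ^ 3)) * |r| ^ (-(5 / 2 : ℝ)) := by
    rw [limit_value_eq γ hγ r hr, ← hm, ← hS]
    rw [show m / 2 = S ^ 2 from hSsq.symm]
    field_simp
    ring
  rw [hval] at hlim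
  apply hlim.congr'
  filter_upwards [self_mem_nhdsWithin] with B hB
  rw [g_formula γ hγ x h g hx hh hg B hB ε hε r hr]
  unfold phi psi'
  rfl

noncomputable def fC (C : ℝ) : ℝ → ℝ := fun r => min 1 (r ^ 2) * (C * |r| ^ (-(5 / 2 : ℝ)))

lemma fC_even (C r : ℝ) : fC C (-r) = fC C r := by simp [fC, neg_sq, abs_neg]

lemma fC_nonneg (C : ℝ) (hC : 0 ≤ C) (x : ℝ) : 0 ≤ fC C x :=
  mul_nonneg (le_min zero_le_one (sq_nonneg x))
    (mul_nonneg hC (Real.rpow_nonneg (abs_nonneg x) _))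

lemma fC_contAt (C : ℝ) (x : ℝ) (hx : x ≠ 0) : ContinuousAt (fC C) x := by
  apply ContinuousAt.mul ((continuous_const.min (continuous_pow 2)).continuousAt)
  apply ContinuousAt.mul continuousAt_const
  exact (Real.continuousAt_rpow_const _ _ (Or.inl (abs_ne_zero.2 hx))).comp
    continuous_abs.continuousAt

lemma fC_int_Ioi (C : ℝ) (hC : 0 ≤ C) : IntegrableOn (fC C) (Set.Ioi 1) := by
  apply Integrable.mono' (g := fun x => C * x ^ (-(5 / 2) : ℝ))
    (((integrableOn_Ioi_rpow_iff one_pos).2 (by norm_num)).const_mul C)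
  · exact ContinuousOn.aestronglyMeasurable
      (fun x hx => (fC_contAt C x (by intro h0; rw [h0] at hx; exact absurd hx (by norm_num))).continuousWithinAt)
      measurableSet_Ioi
  · rw [ae_restrict_iff' measurableSet_Ioi]
    apply ae_of_all
    intro x hx
    have hx1 : (1:ℝ) < x := hx
    rw [Real.norm_of_nonneg (fC_nonneg C hC x)]
    unfold fC
    rw [abs_of_pos (by linarith)]
    calc min 1 (x ^ 2) * (C * x ^ (-(5 / 2) : ℝ))
        ≤ 1 * (C * x ^ (-(5 / 2) : ℝ)) := by
          apply mul_le_mul_of_nonneg_right (min_le_left _ _)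
          exact mul_nonneg hC (Real.rpow_nonneg (by linarith) _)
      _ = C * x ^ (-(5 / 2) : ℝ) := one_mul _

lemma fC_int_Ioc (C : ℝ) (hC : 0 ≤ C) : IntegrableOn (fC C) (Set.Ioc 0 1) := by
  apply Integrable.mono' (g := fun x => C * x ^ (-(1 / 2) : ℝ))
    (((intervalIntegrable_iff_integrableOn_Ioc_of_le zero_le_one).1
      (intervalIntegral.intervalIntegrable_rpow' (by norm_num))).const_mul C)
  · exact ContinuousOn.aestronglyMeasurable
      (fun x hx => (fC_contAt C x (ne_of_gt hx.1)).continuousWithinAt)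
      measurableSet_Ioc
  · rw [ae_restrict_iff' measurableSet_Ioc]
    apply ae_of_all
    intro x hx
    rw [Real.norm_of_nonneg (fC_nonneg C hC x)]
    unfold fC
    rw [abs_of_pos hx.1]
    calc min 1 (x ^ 2) * (C * x ^ (-(5 / 2) : ℝ))
        ≤ x ^ 2 * (C * x ^ (-(5 / 2) : ℝ)) := by
          apply mul_le_mul_of_nonneg_right (min_le_right _ _)
          exact mul_nonneg hC (Real.rpow_nonneg (le_of_lt hx.1) _)
      _ = C * (x ^ ((2:ℕ) : ℝ) * x ^ (-(5 / 2) : ℝ)) := by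
          rw [Real.rpow_natCast]; ring
      _ = C * x ^ (-(1 / 2) : ℝ) := by
          rw [← Real.rpow_add hx.1]; norm_num

lemma fC_integrable (C : ℝ) (hC : 0 ≤ C) : Integrable (fC C) := by
  have hmirror : ∀ s : Set ℝ, IntegrableOn (fC C) (Neg.neg ⁻¹' s) → IntegrableOn (fC C) s := by
    intro s hs
    apply ((Measure.measurePreserving_neg (volume : Measure ℝ)).integrableOn_comp_preimage
      (Homeomorph.neg ℝ).measurableEmbedding).mp
    have : fC C ∘ Neg.neg = fC C := funext fun y => fC_even C y
    rwa [this]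
  have h1 : IntegrableOn (fC C) (Set.Iio (-1)) := by
    apply hmirror
    rw [show Neg.neg ⁻¹' Set.Iio (-1:ℝ) = Set.Ioi 1 by ext y; simp]
    exact fC_int_Ioi C hC
  have h2 : IntegrableOn (fC C) (Set.Ico (-1) 0) := by
    apply hmirror
    rw [show Neg.neg ⁻¹' Set.Ico (-1:ℝ) 0 = Set.Ioc 0 1 by
      ext y; simp [Set.mem_Ico, Set.mem_Ioc, and_comm]]
    exact fC_int_Ioc C hC
  have h0 : IntegrableOn (fC C) ({0} : Set ℝ) := by
    unfold IntegrableOn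
    rw [show (volume : Measure ℝ).restrict {0} = 0 by
      rw [Measure.restrict_eq_zero]; simp]
    exact integrable_zero_measure
  rw [← integrableOn_univ]
  have hcover : (Set.univ : Set ℝ) =
      Set.Iio (-1) ∪ (Set.Ico (-1) 0 ∪ ({0} ∪ (Set.Ioc 0 1 ∪ Set.Ioi 1))) := by
    ext y
    simp only [Set.mem_univ, Set.mem_union, Set.mem_Iio, Set.mem_Ico, Set.mem_singleton_iff,
      Set.mem_Ioc, Set.mem_Ioi, true_iff]
    rcases lt_trichotomy y 0 with hy | hy | hy
    · rcases lt_or_ge y (-1) with h | h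
      · exact Or.inl h
      · exact Or.inr (Or.inl ⟨h, hy⟩)
    · exact Or.inr (Or.inr (Or.inl hy))
    · rcases le_or_gt y 1 with h | h
      · exact Or.inr (Or.inr (Or.inr (Or.inl ⟨hy, h⟩)))
      · exact Or.inr (Or.inr (Or.inr (Or.inr h)))
  rw [hcover]
  exact ((h1.union (h2.union (h0.union ((fC_int_Ioc C hC).union (fC_int_Ioi C hC))))))

/-- Fix `γ > 0` and define `g₀(r) = (π/(2¹¹γ³))^(1/2)·|r|^(-5/2)` for `r ≠ 0`.
Then for each sign, `g_{B,±}(r) → g₀(r)` as `B → 0⁺` for every `r ≠ 0`, and `g₀` is the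
density of a Lévy measure on `ℝ \ {0}`. -/
theorem stmt_7 (γ : ℝ) (hγ : 0 < γ)
    (x h g : ℝ → ℝ → ℝ → ℝ)
    (hx : ∀ B : ℝ, 0 < B → ∀ ε : ℝ, (ε = 1 ∨ ε = -1) → ∀ r : ℝ, r ≠ 0 →
      (2 * Real.sqrt (x B ε r ^ 2 + B ^ 2 / 4) + ε * B) * x B ε r = Real.pi / (γ * r))
    (hh : ∀ B : ℝ, 0 < B → ∀ ε : ℝ, (ε = 1 ∨ ε = -1) → ∀ r : ℝ, r ≠ 0 →
      h B ε r = (1 / (4 * Real.pi)) *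
        (if 0 < r then
          ∫ t in (0 : ℝ)..(x B ε r),
            (1 / 2 + ε * B / (4 * Real.sqrt (t ^ 2 + B ^ 2 / 4))) * t ^ 2
         else
          ∫ t in (x B ε r)..(0 : ℝ),
            (1 / 2 + ε * B / (4 * Real.sqrt (t ^ 2 + B ^ 2 / 4))) * t ^ 2))
    (hg : ∀ B : ℝ, 0 < B → ∀ ε : ℝ, (ε = 1 ∨ ε = -1) → ∀ r : ℝ, r ≠ 0 →
      g B ε r = if 0 < r then -(deriv (h B ε) r) else deriv (h B ε) r) :
    (∀ ε : ℝ, (ε = 1 ∨ ε = -1) → ∀ r : ℝ, r ≠ 0 →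
      Tendsto (fun B => g B ε r) (𝓝[>] 0)
        (𝓝 (Real.sqrt (Real.pi / (2 ^ 11 * γ ^ 3)) * |r| ^ (-(5 / 2 : ℝ))))) ∧
    ∫⁻ r in ({0}ᶜ : Set ℝ),
      ENNReal.ofReal (min 1 (r ^ 2) *
        (Real.sqrt (Real.pi / (2 ^ 11 * γ ^ 3)) * |r| ^ (-(5 / 2 : ℝ)))) < ⊤ := by
  constructor
  · intro ε hε r hr
    exact g_tendsto γ hγ x h g hx hh hg ε hε r hr
  · have hInt := fC_integrable (Real.sqrt (Real.pi / (2 ^ 11 * γ ^ 3))) (Real.sqrt_nonneg _)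
    calc ∫⁻ r in ({0}ᶜ : Set ℝ),
        ENNReal.ofReal (min 1 (r ^ 2) *
          (Real.sqrt (Real.pi / (2 ^ 11 * γ ^ 3)) * |r| ^ (-(5 / 2 : ℝ))))
        ≤ ∫⁻ r : ℝ, ENNReal.ofReal (fC (Real.sqrt (Real.pi / (2 ^ 11 * γ ^ 3))) r) :=
          setLIntegral_le_lintegral _ _
      _ < ⊤ := hInt.lintegral_lt_top
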